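/- In the single-agent BEBA model with p ≤ 0 and β < -1/p (or p = 0), for every initial opinion y(0) ∈ [-1,1] the iterates y(t) converge to p. -/

import Mathlib

/-- In the single-agent BEBA model with `p ≤ 0` and (`β < -1/p` or `p = 0`),
for every initial opinion `y 0 ∈ [-1, 1]` the iterates `y t` converge to `p`. -/
theorem stmt_10 (w β p : ℝ) (hw : 0 < w) (hβ : 0 < β)
    (hp : p ∈ Set.Icc (-1 : ℝ) 0)
    (hcase : β < -1 / p ∨ p = 0)
    (y : ℕ → ℝ) (h0 : y 0 ∈ Set.Icc (-1 : ℝ) 1)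
    (hupd : ∀ t, y (t + 1) =
      if w + β * p * y t + 1 ≤ 0 then Real.sign (y t)
      else (w * y t + β * p ^ 2 * y t + p) / (w + β * p * y t + 1)) :
    Filter.Tendsto y Filter.atTop (nhds p) := by
  obtain ⟨hp1, hp0⟩ := hp
  -- q = β * p ∈ (-1, 0]
  have hq2 : β * p ≤ 0 := mul_nonpos_of_nonneg_of_nonpos hβ.le hp0
  have hq1 : -1 < β * p := by
    rcases hcase with h | h
    · rcases eq_or_lt_of_le hp0 with rfl | hplt
      · simp at h; linarith
      · have := mul_lt_mul_of_neg_right h hplt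
        rw [div_mul_cancel₀] at this
        · linarith
        · exact ne_of_lt hplt
    · rw [h]; norm_num
  -- denominator bound
  have hden : ∀ z : ℝ, z ∈ Set.Icc (-1 : ℝ) 1 → w + β * p + 1 ≤ w + β * p * z + 1 := by
    intro z ⟨hz1, hz2⟩
    nlinarith
  have hD : 0 < w + β * p + 1 := by linarith
  -- invariance and the explicit formula
  have key : ∀ t, y t ∈ Set.Icc (-1 : ℝ) 1 ∧
      (y (t+1) = (w * y t + β * p ^ 2 * y t + p) / (w + β * p * y t + 1)) := by
    intro t
    induction t with
    | zero =>
      refine ⟨h0, ?_⟩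
      rw [hupd 0, if_neg]
      have := hden (y 0) h0
      linarith
    | succ n ih =>
      obtain ⟨⟨hn1, hn2⟩, hform⟩ := ih
      have hdpos : 0 < w + β * p * y n + 1 := lt_of_lt_of_le hD (hden _ ⟨hn1, hn2⟩)
      have hmem : y (n+1) ∈ Set.Icc (-1 : ℝ) 1 := by
        rw [hform]
        have hbp : 0 < β * p * y n + 1 := by nlinarith
        constructor
        · rw [le_div_iff₀ hdpos]
          nlinarith [mul_nonneg (by linarith : (0:ℝ) ≤ 1 + p) hbp.le,
            mul_nonneg hw.le (by linarith : (0:ℝ) ≤ y n + 1)]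
        · rw [div_le_one hdpos]
          nlinarith [mul_nonneg (by linarith : (0:ℝ) ≤ 1 - p) hbp.le,
            mul_nonneg hw.le (by linarith : (0:ℝ) ≤ 1 - y n)]
      refine ⟨hmem, ?_⟩
      rw [hupd (n+1), if_neg]
      have := hden _ hmem
      linarith
  set c : ℝ := w / (w + β * p + 1) with hc
  have hc0 : 0 ≤ c := div_nonneg hw.le hD.le
  have hc1 : c < 1 := by
    rw [hc, div_lt_one hD]; linarith
  -- contraction
  have contr : ∀ t, |y (t+1) - p| ≤ c * |y t - p| := by
    intro t
    obtain ⟨hmem, hform⟩ := key t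
    have hdpos : 0 < w + β * p * y t + 1 := lt_of_lt_of_le hD (hden _ hmem)
    have hdiff : y (t+1) - p = w * (y t - p) / (w + β * p * y t + 1) := by
      rw [hform]
      rw [eq_div_iff hdpos.ne', sub_mul, div_mul_cancel₀ _ hdpos.ne']
      ring
    rw [hdiff, abs_div, abs_mul, abs_of_pos hdpos, abs_of_pos hw]
    rw [div_le_iff₀ hdpos, hc, div_mul_eq_mul_div, div_mul_eq_mul_div, le_div_iff₀ hD]
    have h1 := hden _ hmem
    have := mul_le_mul_of_nonneg_left h1 (mul_nonneg hw.le (abs_nonneg (y t - p)))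
    linarith
  have bound : ∀ t, |y t - p| ≤ |y 0 - p| * c ^ t := by
    intro t
    induction t with
    | zero => simp
    | succ n ih =>
      calc |y (n+1) - p| ≤ c * |y n - p| := contr n
        _ ≤ c * (|y 0 - p| * c ^ n) := by
            exact mul_le_mul_of_nonneg_left ih hc0
        _ = |y 0 - p| * c ^ (n+1) := by ring
  rw [tendsto_iff_dist_tendsto_zero]
  have hgeo : Filter.Tendsto (fun t => |y 0 - p| * c ^ t) Filter.atTop (nhds 0) := by
    have := tendsto_pow_atTop_nhds_zero_of_lt_one hc0 hc1
    simpa using this.const_mul (|y 0 - p|)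
  refine squeeze_zero (fun t => dist_nonneg) (fun t => ?_) hgeo
  rw [Real.dist_eq]
  exact bound t
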